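/- (Dependent-sum bound, eq. (5.7) in the proof of Lemma 2.) Let F = { i ∈ [n] : π(i)=i } be the set of fixed points of π, with |F| = βn. Fix a vertex u ∈ [n], and for i ∈ [n] \ (F ∪ {u, π^{−1}(u)}) set Y_i = A1(u,i)·B1(u,π(i)). Then P( Σ_i Y_i ≤ y_min ) ≤ n^{−8/3}, where y_min = (n(1−β)−2)·p²·s² − 5·√(n·p²·s²·log n) − (25/3)·log n. (The variables Y_i each have distribution Bernoulli(p²s²), and Y_i is dependent on Y_{i'} only when i' = π(i) or i' = π^{−1}(i).) -/

import Mathlib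

open scoped Classical
open Finset

namespace SeededGraphMatching

/-- Sample space of the correlated Erdős–Rényi model `𝒢(n,p;s)`: for each unordered pair
`e` of vertices there is a triple `(X_e, S_e, T_e)` of Booleans. -/
abbrev ESpace (n : ℕ) := Sym2 (Fin n) → Bool × Bool × Bool

/-- Probability weight of a single triple: `X_e ~ Bern(p)`, `S_e ~ Bern(s)`, `T_e ~ Bern(s)`,
all independent. -/
noncomputable def wt (p s : ℝ) (b : Bool × Bool × Bool) : ℝ :=
  (if b.1 then p else 1 - p) * (if b.2.1 then s else 1 - s) * (if b.2.2 then s else 1 - s)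

/-- Probability of an elementary outcome (product of independent Bernoullis). -/
noncomputable def prOmega (n : ℕ) (p s : ℝ) (ω : ESpace n) : ℝ :=
  ∏ e : Sym2 (Fin n), wt p s (ω e)

/-- Probability of an event. -/
noncomputable def Pr (n : ℕ) (p s : ℝ) (E : Set (ESpace n)) : ℝ :=
  ∑ ω : ESpace n, E.indicator (prOmega n p s) ω

/-- `G1` contains the edge `e = {i,j}` (for `i ≠ j`) iff `X_e = 1` and `S_e = 1`. -/
def G1 (n : ℕ) (ω : ESpace n) : SimpleGraph (Fin n) where
  Adj i j := i ≠ j ∧ (ω s(i, j)).1 = true ∧ (ω s(i, j)).2.1 = true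
  symm := by
    constructor
    intro i j h
    refine ⟨h.1.symm, ?_, ?_⟩
    · rw [Sym2.eq_swap]; exact h.2.1
    · rw [Sym2.eq_swap]; exact h.2.2
  loopless := ⟨fun i h => h.1 rfl⟩

/-- `G2` contains the edge `e = {i,j}` (for `i ≠ j`) iff `X_e = 1` and `T_e = 1`. -/
def G2 (n : ℕ) (ω : ESpace n) : SimpleGraph (Fin n) where
  Adj i j := i ≠ j ∧ (ω s(i, j)).1 = true ∧ (ω s(i, j)).2.2 = true
  symm := by
    constructor
    intro i j h
    refine ⟨h.1.symm, ?_, ?_⟩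
    · rw [Sym2.eq_swap]; exact h.2.1
    · rw [Sym2.eq_swap]; exact h.2.2
  loopless := ⟨fun i h => h.1 rfl⟩

/-- Number of fixed points of the seed permutation `π`. -/
def fixedCount (n : ℕ) (π : Equiv.Perm (Fin n)) : ℕ :=
  (univ.filter fun i => π i = i).card

/-- 0/1 adjacency indicator of `G1`. -/
noncomputable def A1 (n : ℕ) (ω : ESpace n) (u i : Fin n) : ℝ :=
  if (G1 n ω).Adj u i then 1 else 0

/-- 0/1 adjacency indicator of `G2`. -/
noncomputable def B1 (n : ℕ) (ω : ESpace n) (u i : Fin n) : ℝ :=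
  if (G2 n ω).Adj u i then 1 else 0

/-- 1-hop witness count: `W1(u,v) = Σ_i A1(u,i) · B1(v,π(i))`. -/
noncomputable def W1 (n : ℕ) (π : Equiv.Perm (Fin n)) (ω : ESpace n) (u v : Fin n) : ℝ :=
  ∑ i : Fin n, A1 n ω u i * B1 n ω v (π i)

/-! ### Auxiliary development -/

/-- Indicator of "`X_e = 1` and `S_e = 1`". -/
noncomputable def fA : Bool × Bool × Bool → ℝ :=
  fun b => if b.1 = true ∧ b.2.1 = true then 1 else 0

/-- Indicator of "`X_e = 1` and `T_e = 1`". -/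
noncomputable def fB : Bool × Bool × Bool → ℝ :=
  fun b => if b.1 = true ∧ b.2.2 = true then 1 else 0

lemma sum_wt (p s : ℝ) : ∑ b : Bool × Bool × Bool, wt p s b = 1 := by
  simp [wt, Fintype.sum_prod_type]; ring

lemma sum_wt_fA (p s : ℝ) : ∑ b : Bool × Bool × Bool, wt p s b * fA b = p * s := by
  simp [wt, fA, Fintype.sum_prod_type]; ring

lemma sum_wt_fB (p s : ℝ) : ∑ b : Bool × Bool × Bool, wt p s b * fB b = p * s := by
  simp [wt, fB, Fintype.sum_prod_type]; ring

lemma wt_nonneg {p s : ℝ} (hp0 : 0 ≤ p) (hp1 : p ≤ 1) (hs0 : 0 ≤ s) (hs1 : s ≤ 1)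
    (b : Bool × Bool × Bool) : 0 ≤ wt p s b := by
  unfold wt
  split_ifs <;>
    exact mul_nonneg (mul_nonneg (by linarith) (by linarith)) (by linarith)

lemma prOmega_nonneg {n : ℕ} {p s : ℝ} (hp0 : 0 ≤ p) (hp1 : p ≤ 1) (hs0 : 0 ≤ s)
    (hs1 : s ≤ 1) (ω : ESpace n) : 0 ≤ prOmega n p s ω :=
  Finset.prod_nonneg fun _ _ => wt_nonneg hp0 hp1 hs0 hs1 _

lemma sum_prOmega (n : ℕ) (p s : ℝ) : ∑ ω : ESpace n, prOmega n p s ω = 1 := by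
  unfold prOmega
  rw [show (∑ ω : ESpace n, ∏ e : Sym2 (Fin n), wt p s (ω e))
      = ∏ e : Sym2 (Fin n), ∑ b : Bool × Bool × Bool, wt p s b
    from (Fintype.prod_sum _).symm]
  simp [sum_wt]
set_option maxHeartbeats 1000000 in
lemma moment (n : ℕ) (p s : ℝ) (A B : Finset (Sym2 (Fin n))) (hAB : Disjoint A B) :
    ∑ ω : ESpace n,
        prOmega n p s ω * ((∏ e ∈ A, fA (ω e)) * ∏ e ∈ B, fB (ω e))
      = (p * s) ^ (A.card + B.card) := by
  have hpoint : ∀ ω : ESpace n,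
      prOmega n p s ω * ((∏ e ∈ A, fA (ω e)) * ∏ e ∈ B, fB (ω e))
        = ∏ e : Sym2 (Fin n),
            (wt p s (ω e) * ((if e ∈ A then fA (ω e) else 1) *
              (if e ∈ B then fB (ω e) else 1))) := by
    intro ω
    rw [Finset.prod_mul_distrib, Finset.prod_mul_distrib, Finset.prod_ite_mem,
      Finset.prod_ite_mem, Finset.univ_inter, Finset.univ_inter]
    rfl
  simp_rw [hpoint]
  rw [show (∑ ω : ESpace n, ∏ e : Sym2 (Fin n),
        (wt p s (ω e) * ((if e ∈ A then fA (ω e) else 1) * (if e ∈ B then fB (ω e) else 1))))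
      = ∏ e : Sym2 (Fin n), ∑ b : Bool × Bool × Bool,
          (wt p s b * ((if e ∈ A then fA b else 1) * (if e ∈ B then fB b else 1)))
    from (Fintype.prod_sum (fun (e : Sym2 (Fin n)) (b : Bool × Bool × Bool) =>
        wt p s b * ((if e ∈ A then fA b else 1) * (if e ∈ B then fB b else 1)))).symm]
  have hcol : ∀ e : Sym2 (Fin n),
      (∑ b : Bool × Bool × Bool, wt p s b * ((if e ∈ A then fA b else 1) *
        (if e ∈ B then fB b else 1))) = if e ∈ A ∪ B then p * s else 1 := by
    intro e
    by_cases hA : e ∈ A <;> by_cases hB : e ∈ B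
    · exact absurd hB (Finset.disjoint_left.mp hAB hA)
    · simp [hA, hB, sum_wt_fA]
    · simp [hA, hB, sum_wt_fB]
    · simp [hA, hB, sum_wt]
  simp_rw [hcol]
  rw [Finset.prod_ite_mem, Finset.univ_inter, Finset.prod_const,
    Finset.card_union_of_disjoint hAB]
lemma A1_eq {n : ℕ} (ω : ESpace n) {u i : Fin n} (h : u ≠ i) :
    A1 n ω u i = fA (ω s(u, i)) := by
  have hiff : (G1 n ω).Adj u i ↔ ((ω s(u, i)).1 = true ∧ (ω s(u, i)).2.1 = true) :=
    ⟨fun hadj => (hadj : u ≠ i ∧ ((ω s(u, i)).1 = true ∧ (ω s(u, i)).2.1 = true)).2,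
      fun hx => (⟨h, hx⟩ : u ≠ i ∧ ((ω s(u, i)).1 = true ∧ (ω s(u, i)).2.1 = true))⟩
  unfold A1 fA
  exact if_congr hiff rfl rfl

lemma B1_eq {n : ℕ} (ω : ESpace n) {u j : Fin n} (h : u ≠ j) :
    B1 n ω u j = fB (ω s(u, j)) := by
  have hiff : (G2 n ω).Adj u j ↔ ((ω s(u, j)).1 = true ∧ (ω s(u, j)).2.2 = true) :=
    ⟨fun hadj => (hadj : u ≠ j ∧ ((ω s(u, j)).1 = true ∧ (ω s(u, j)).2.2 = true)).2,
      fun hx => (⟨h, hx⟩ : u ≠ j ∧ ((ω s(u, j)).1 = true ∧ (ω s(u, j)).2.2 = true))⟩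
  unfold B1 fB
  exact if_congr hiff rfl rfl
set_option maxHeartbeats 1000000 in
lemma class_mgf (n : ℕ) (p s : ℝ) (π : Equiv.Perm (Fin n)) (u : Fin n)
    (C : Finset (Fin n))
    (hu : ∀ i ∈ C, i ≠ u ∧ π i ≠ u ∧ π i ≠ i)
    (hsep : ∀ i ∈ C, ∀ j ∈ C, i ≠ j → π i ≠ j) (c : ℝ) :
    ∑ ω : ESpace n, prOmega n p s ω *
        ∏ i ∈ C, (1 + c * (A1 n ω u i * B1 n ω u (π i)))
      = (1 + c * (p * s) ^ 2) ^ C.card := by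
  have key : ∀ ω : ESpace n,
      ∏ i ∈ C, (1 + c * (A1 n ω u i * B1 n ω u (π i)))
        = ∑ T ∈ C.powerset, c ^ T.card *
            ((∏ e ∈ T.image fun i => s(u, i), fA (ω e)) *
             ∏ e ∈ T.image fun i => s(u, π i), fB (ω e)) := by
    intro ω
    have h1 : ∀ i ∈ C, (1 + c * (A1 n ω u i * B1 n ω u (π i)))
        = c * (fA (ω s(u, i)) * fB (ω s(u, π i))) + 1 := by
      intro i hi
      rw [A1_eq ω (Ne.symm (hu i hi).1), B1_eq ω (Ne.symm (hu i hi).2.1)]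
      ring
    calc ∏ i ∈ C, (1 + c * (A1 n ω u i * B1 n ω u (π i)))
        = ∏ i ∈ C, (c * (fA (ω s(u, i)) * fB (ω s(u, π i))) + 1) :=
          Finset.prod_congr rfl h1
      _ = ∑ T ∈ C.powerset,
            (∏ i ∈ T, c * (fA (ω s(u, i)) * fB (ω s(u, π i)))) * ∏ _i ∈ C \ T, (1:ℝ) :=
          Finset.prod_add _ _ _
      _ = ∑ T ∈ C.powerset, c ^ T.card *
            ((∏ e ∈ T.image fun i => s(u, i), fA (ω e)) *
             ∏ e ∈ T.image fun i => s(u, π i), fB (ω e)) := by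
          refine Finset.sum_congr rfl fun T hT => ?_
          have hTC := Finset.mem_powerset.mp hT
          have hAinj : ∀ x ∈ T, ∀ y ∈ T, s(u, x) = s(u, y) → x = y := by
            intro x hx y hy hxy
            rcases Sym2.eq_iff.mp hxy with ⟨-, h⟩ | ⟨-, h2⟩
            · exact h
            · exact absurd h2 (hu x (hTC hx)).1
          have hBinj : ∀ x ∈ T, ∀ y ∈ T, s(u, π x) = s(u, π y) → x = y := by
            intro x hx y hy hxy
            rcases Sym2.eq_iff.mp hxy with ⟨-, h⟩ | ⟨-, h2⟩
            · exact π.injective h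
            · exact absurd h2 (hu x (hTC hx)).2.1
          rw [Finset.prod_const_one, mul_one, Finset.prod_mul_distrib,
            Finset.prod_const, Finset.prod_image hAinj, Finset.prod_image hBinj,
            Finset.prod_mul_distrib]
  simp_rw [key, Finset.mul_sum]
  rw [Finset.sum_comm]
  have hterm : ∀ T ∈ C.powerset,
      (∑ ω : ESpace n, prOmega n p s ω * (c ^ T.card *
        ((∏ e ∈ T.image fun i => s(u, i), fA (ω e)) *
         ∏ e ∈ T.image fun i => s(u, π i), fB (ω e))))
      = (c * (p * s) ^ 2) ^ T.card := by
    intro T hT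
    have hTC := Finset.mem_powerset.mp hT
    have hdisj : Disjoint (T.image fun i => s(u, i)) (T.image fun i => s(u, π i)) := by
      rw [Finset.disjoint_left]
      rintro e he₁ he₂
      obtain ⟨x, hx, rfl⟩ := Finset.mem_image.mp he₁
      obtain ⟨y, hy, hxy⟩ := Finset.mem_image.mp he₂
      rcases Sym2.eq_iff.mp hxy with ⟨-, h⟩ | ⟨h1, -⟩
      · -- h : π y = x
        by_cases hxy' : x = y
        · exact (hu y (hTC hy)).2.2 (h.trans hxy')
        · exact hsep y (hTC hy) x (hTC hx) (fun hh => hxy' hh.symm) h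
      · exact absurd h1.symm (hu x (hTC hx)).1
    have hAinj : ∀ x ∈ T, ∀ y ∈ T, s(u, x) = s(u, y) → x = y := by
      intro x hx y hy hxy
      rcases Sym2.eq_iff.mp hxy with ⟨-, h⟩ | ⟨-, h2⟩
      · exact h
      · exact absurd h2 (hu x (hTC hx)).1
    have hBinj : ∀ x ∈ T, ∀ y ∈ T, s(u, π x) = s(u, π y) → x = y := by
      intro x hx y hy hxy
      rcases Sym2.eq_iff.mp hxy with ⟨-, h⟩ | ⟨-, h2⟩
      · exact π.injective h
      · exact absurd h2 (hu x (hTC hx)).2.1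
    have hcards : (T.image fun i => s(u, i)).card = T.card ∧
        (T.image fun i => s(u, π i)).card = T.card := by
      constructor
      · exact Finset.card_image_of_injOn fun x hx y hy h => hAinj x hx y hy h
      · exact Finset.card_image_of_injOn fun x hx y hy h => hBinj x hx y hy h
    calc (∑ ω : ESpace n, prOmega n p s ω * (c ^ T.card *
          ((∏ e ∈ T.image fun i => s(u, i), fA (ω e)) *
           ∏ e ∈ T.image fun i => s(u, π i), fB (ω e))))
        = c ^ T.card * ∑ ω : ESpace n, prOmega n p s ω *
            ((∏ e ∈ T.image fun i => s(u, i), fA (ω e)) *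
             ∏ e ∈ T.image fun i => s(u, π i), fB (ω e)) := by
          rw [Finset.mul_sum]
          exact Finset.sum_congr rfl fun ω _ => by ring
      _ = c ^ T.card * (p * s) ^
            ((T.image fun i => s(u, i)).card + (T.image fun i => s(u, π i)).card) := by
          rw [moment n p s _ _ hdisj]
      _ = (c * (p * s) ^ 2) ^ T.card := by
          rw [hcards.1, hcards.2]
          ring
  rw [Finset.sum_congr rfl hterm]
  calc ∑ T ∈ C.powerset, (c * (p * s) ^ 2) ^ T.card
      = ∏ _i ∈ C, (c * (p * s) ^ 2 + 1) := by
        rw [Finset.prod_add]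
        refine Finset.sum_congr rfl fun T hT => ?_
        rw [Finset.prod_const, Finset.prod_const_one, mul_one]
    _ = (1 + c * (p * s) ^ 2) ^ C.card := by
        rw [Finset.prod_const, add_comm]
lemma exists_coloring {n : ℕ} (π : Equiv.Perm (Fin n)) (I : Finset (Fin n)) :
    ∃ f : Fin n → Fin 3, ∀ i ∈ I, ∀ j ∈ I, i ≠ j → π i = j → f i ≠ f j := by
  classical
  induction I using Finset.induction_on with
  | empty => exact ⟨fun _ => 0, by simp⟩
  | @insert x t hx ih =>
    obtain ⟨f, hf⟩ := ih
    set N : Finset (Fin 3) := (t.filter fun j => π x = j ∨ π j = x).image f with hN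
    have hNcard : N.card ≤ 2 := by
      calc N.card ≤ (t.filter fun j => π x = j ∨ π j = x).card := Finset.card_image_le
        _ ≤ ({π x, π.symm x} : Finset (Fin n)).card := by
            refine Finset.card_le_card ?_
            intro j hj
            rcases (Finset.mem_filter.mp hj).2 with h | h
            · exact Finset.mem_insert.mpr (Or.inl h.symm)
            · refine Finset.mem_insert.mpr (Or.inr ?_)
              rw [Finset.mem_singleton, ← h, Equiv.symm_apply_apply]
        _ ≤ 2 := (Finset.card_insert_le _ _).trans (by simp)
    have hc : ∃ c : Fin 3, c ∉ N := by
      by_contra hcon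
      push_neg at hcon
      have h1 : (Finset.univ : Finset (Fin 3)).card ≤ N.card :=
        Finset.card_le_card fun c _ => hcon c
      simp only [Finset.card_univ, Fintype.card_fin] at h1
      omega
    obtain ⟨c, hc⟩ := hc
    refine ⟨Function.update f x c, ?_⟩
    intro i hi j hj hij hπ
    rcases Finset.mem_insert.mp hi with rfl | hi' <;>
      rcases Finset.mem_insert.mp hj with rfl | hj'
    · exact absurd rfl hij
    · rw [Function.update_self, Function.update_of_ne (by rintro rfl; exact hx hj')]
      intro hcc
      exact hc (hN ▸ Finset.mem_image.mpr
        ⟨j, Finset.mem_filter.mpr ⟨hj', Or.inl hπ⟩, hcc.symm⟩)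
    · rw [Function.update_self, Function.update_of_ne (by rintro rfl; exact hx hi')]
      intro hcc
      exact hc (hN ▸ Finset.mem_image.mpr
        ⟨i, Finset.mem_filter.mpr ⟨hi', Or.inr hπ⟩, hcc⟩)
    · rw [Function.update_of_ne (by rintro rfl; exact hx hi'),
        Function.update_of_ne (by rintro rfl; exact hx hj')]
      exact hf i hi' j hj' hij hπ

lemma weighted_cs {α : Type*} [Fintype α] (μ f g : α → ℝ) (hμ : ∀ x, 0 ≤ μ x) :
    (∑ x, μ x * (f x * g x)) ^ 2 ≤ (∑ x, μ x * f x ^ 2) * ∑ x, μ x * g x ^ 2 := by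
  have h := Finset.sum_mul_sq_le_sq_mul_sq Finset.univ
    (fun x => Real.sqrt (μ x) * f x) (fun x => Real.sqrt (μ x) * g x)
  have e1 : ∀ x : α, (Real.sqrt (μ x) * f x) * (Real.sqrt (μ x) * g x) = μ x * (f x * g x) := by
    intro x; rw [mul_mul_mul_comm, Real.mul_self_sqrt (hμ x)]
  have e2 : ∀ x : α, (Real.sqrt (μ x) * f x) ^ 2 = μ x * f x ^ 2 := by
    intro x; rw [mul_pow, Real.sq_sqrt (hμ x)]
  have e3 : ∀ x : α, (Real.sqrt (μ x) * g x) ^ 2 = μ x * g x ^ 2 := by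
    intro x; rw [mul_pow, Real.sq_sqrt (hμ x)]
  simp_rw [e1, e2, e3] at h
  exact h

lemma exp4 {α : Type*} [Fintype α] (μ P0 P1 P2 : α → ℝ) (hμ : ∀ x, 0 ≤ μ x)
    (hμ1 : ∑ x, μ x = 1) :
    (∑ x, μ x * (P0 x * P1 x * P2 x)) ^ 4
      ≤ (∑ x, μ x * P0 x ^ 4) * ((∑ x, μ x * P1 x ^ 4) * ∑ x, μ x * P2 x ^ 4) := by
  have cs1 : (∑ x, μ x * (P0 x * P1 x * P2 x)) ^ 2
      ≤ (∑ x, μ x * P0 x ^ 2) * ∑ x, μ x * (P1 x * P2 x) ^ 2 := by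
    have h := weighted_cs μ P0 (fun x => P1 x * P2 x) hμ
    calc (∑ x, μ x * (P0 x * P1 x * P2 x)) ^ 2
        = (∑ x, μ x * (P0 x * (P1 x * P2 x))) ^ 2 := by
          congr 1; exact Finset.sum_congr rfl fun x _ => by ring
      _ ≤ _ := h
  have cs2 : (∑ x, μ x * P0 x ^ 2) ^ 2 ≤ ∑ x, μ x * P0 x ^ 4 := by
    have h := weighted_cs μ (fun x => P0 x ^ 2) (fun x => 1) hμ
    simp only [mul_one, one_pow] at h
    calc (∑ x, μ x * P0 x ^ 2) ^ 2 ≤ (∑ x, μ x * (P0 x ^ 2) ^ 2) * ∑ x, μ x := h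
      _ = ∑ x, μ x * P0 x ^ 4 := by
          rw [hμ1, mul_one]
          exact Finset.sum_congr rfl fun x _ => by ring
  have cs3 : (∑ x, μ x * (P1 x * P2 x) ^ 2) ^ 2
      ≤ (∑ x, μ x * P1 x ^ 4) * ∑ x, μ x * P2 x ^ 4 := by
    have h := weighted_cs μ (fun x => P1 x ^ 2) (fun x => P2 x ^ 2) hμ
    calc (∑ x, μ x * (P1 x * P2 x) ^ 2) ^ 2
        = (∑ x, μ x * (P1 x ^ 2 * P2 x ^ 2)) ^ 2 := by
          congr 1; exact Finset.sum_congr rfl fun x _ => by ring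
      _ ≤ (∑ x, μ x * (P1 x ^ 2) ^ 2) * ∑ x, μ x * (P2 x ^ 2) ^ 2 := h
      _ = _ := by
          congr 1
          · exact Finset.sum_congr rfl fun x _ => by ring
          · exact Finset.sum_congr rfl fun x _ => by ring
  have n1 : (0:ℝ) ≤ ∑ x, μ x * P0 x ^ 2 :=
    Finset.sum_nonneg fun x _ => mul_nonneg (hμ x) (sq_nonneg _)
  have n2 : (0:ℝ) ≤ ∑ x, μ x * (P1 x * P2 x) ^ 2 :=
    Finset.sum_nonneg fun x _ => mul_nonneg (hμ x) (sq_nonneg _)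
  have n3 : (0:ℝ) ≤ ∑ x, μ x * P0 x ^ 4 :=
    Finset.sum_nonneg fun x _ => mul_nonneg (hμ x) (by positivity)
  calc (∑ x, μ x * (P0 x * P1 x * P2 x)) ^ 4
      = ((∑ x, μ x * (P0 x * P1 x * P2 x)) ^ 2) ^ 2 := by ring
    _ ≤ ((∑ x, μ x * P0 x ^ 2) * ∑ x, μ x * (P1 x * P2 x) ^ 2) ^ 2 :=
        pow_le_pow_left₀ (sq_nonneg _) cs1 2
    _ = (∑ x, μ x * P0 x ^ 2) ^ 2 * (∑ x, μ x * (P1 x * P2 x) ^ 2) ^ 2 := by ring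
    _ ≤ (∑ x, μ x * P0 x ^ 4) * ((∑ x, μ x * P1 x ^ 4) * ∑ x, μ x * P2 x ^ 4) :=
        mul_le_mul cs2 cs3 (sq_nonneg _) n3

lemma exp_neg_le {x : ℝ} (hx : 0 ≤ x) : Real.exp (-x) ≤ 1 - x + x ^ 2 / 2 := by
  have h1 := Real.quadratic_le_exp_of_nonneg hx
  have h2 := Real.exp_pos x
  rw [Real.exp_neg, inv_le_iff_one_le_mul₀ h2]
  nlinarith [sq_nonneg (x - 1), sq_nonneg (x * x)]
set_option maxHeartbeats 1000000 in
lemma chernoff4 (n : ℕ) (p s : ℝ) (hp : p ∈ Set.Ioo (0:ℝ) 1) (hs : s ∈ Set.Ioc (0:ℝ) 1)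
    (π : Equiv.Perm (Fin n)) (u : Fin n) (I : Finset (Fin n))
    (hI : ∀ i ∈ I, π i ≠ i ∧ i ≠ u ∧ π i ≠ u) (c lam : ℝ) (hlam : 0 ≤ lam) :
    (Pr n p s {ω | ∑ i ∈ I, A1 n ω u i * B1 n ω u (π i) ≤ c}) ^ 4
      ≤ Real.exp (4 * (lam * c)) *
          (1 + (Real.exp (-(4 * lam)) - 1) * (p * s) ^ 2) ^ I.card := by
  classical
  obtain ⟨hp0, hp1⟩ := hp
  obtain ⟨hs0, hs1⟩ := hs
  have hμ : ∀ ω : ESpace n, 0 ≤ prOmega n p s ω := fun ω =>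
    prOmega_nonneg hp0.le hp1.le hs0.le hs1 ω
  -- Chernoff step
  have step1 : Pr n p s {ω | ∑ i ∈ I, A1 n ω u i * B1 n ω u (π i) ≤ c}
      ≤ Real.exp (lam * c) * ∑ ω : ESpace n, prOmega n p s ω *
          Real.exp (-lam * ∑ i ∈ I, A1 n ω u i * B1 n ω u (π i)) := by
    rw [Pr, Finset.mul_sum]
    refine Finset.sum_le_sum fun ω _ => ?_
    by_cases hω : ω ∈ {ω : ESpace n | ∑ i ∈ I, A1 n ω u i * B1 n ω u (π i) ≤ c}
    · rw [Set.indicator_of_mem hω]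
      have hS : ∑ i ∈ I, A1 n ω u i * B1 n ω u (π i) ≤ c := hω
      have h1 : (1:ℝ) ≤ Real.exp (lam * c) *
          Real.exp (-lam * ∑ i ∈ I, A1 n ω u i * B1 n ω u (π i)) := by
        rw [← Real.exp_add]
        refine Real.one_le_exp ?_
        nlinarith [mul_le_mul_of_nonneg_left hS hlam]
      calc prOmega n p s ω = prOmega n p s ω * 1 := (mul_one _).symm
        _ ≤ prOmega n p s ω * (Real.exp (lam * c) *
              Real.exp (-lam * ∑ i ∈ I, A1 n ω u i * B1 n ω u (π i))) :=
            mul_le_mul_of_nonneg_left h1 (hμ ω)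
        _ = Real.exp (lam * c) * (prOmega n p s ω *
              Real.exp (-lam * ∑ i ∈ I, A1 n ω u i * B1 n ω u (π i))) := by ring
    · rw [Set.indicator_of_notMem hω]
      exact mul_nonneg (Real.exp_pos _).le (mul_nonneg (hμ ω) (Real.exp_pos _).le)
  -- coloring and classes
  obtain ⟨f, hf⟩ := exists_coloring π I
  set C : Fin 3 → Finset (Fin n) := fun k => I.filter fun i => f i = k with hCdef
  have hCsub : ∀ k, C k ⊆ I := fun k => Finset.filter_subset _ _
  have hCu : ∀ k, ∀ i ∈ C k, i ≠ u ∧ π i ≠ u ∧ π i ≠ i := by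
    intro k i hi
    obtain ⟨h1, h2, h3⟩ := hI i (hCsub k hi)
    exact ⟨h2, h3, h1⟩
  have hCsep : ∀ k, ∀ i ∈ C k, ∀ j ∈ C k, i ≠ j → π i ≠ j := by
    intro k i hi j hj hij hπ
    have h1 := Finset.mem_filter.mp hi
    have h2 := Finset.mem_filter.mp hj
    exact hf i h1.1 j h2.1 hij hπ (h1.2.trans h2.2.symm)
  -- per-class MGF
  have hMGF : ∀ k : Fin 3, (∑ ω : ESpace n, prOmega n p s ω *
        Real.exp (-lam * ∑ i ∈ C k, A1 n ω u i * B1 n ω u (π i)) ^ 4)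
      = (1 + (Real.exp (-(4 * lam)) - 1) * (p * s) ^ 2) ^ (C k).card := by
    intro k
    have hpt : ∀ ω : ESpace n,
        Real.exp (-lam * ∑ i ∈ C k, A1 n ω u i * B1 n ω u (π i)) ^ 4
          = ∏ i ∈ C k, (1 + (Real.exp (-(4 * lam)) - 1) *
              (A1 n ω u i * B1 n ω u (π i))) := by
      intro ω
      have h4 : Real.exp (-lam * ∑ i ∈ C k, A1 n ω u i * B1 n ω u (π i)) ^ 4
          = Real.exp (∑ i ∈ C k, -(4 * lam) * (A1 n ω u i * B1 n ω u (π i))) := by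
        rw [← Real.exp_nat_mul]
        congr 1
        push_cast
        rw [← Finset.mul_sum]
        ring
      rw [h4, Real.exp_sum]
      refine Finset.prod_congr rfl fun i _ => ?_
      have hZ : A1 n ω u i * B1 n ω u (π i) = 0 ∨ A1 n ω u i * B1 n ω u (π i) = 1 := by
        unfold A1 B1
        split_ifs <;> norm_num
      rcases hZ with h | h <;> rw [h]
      · simp
      · simp
    simp_rw [hpt]
    exact class_mgf n p s π u (C k) (hCu k) (hCsep k) _
  -- split the sum over the three classes
  have hsplit : ∀ ω : ESpace n,
      Real.exp (-lam * ∑ i ∈ I, A1 n ω u i * B1 n ω u (π i))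
        = Real.exp (-lam * ∑ i ∈ C 0, A1 n ω u i * B1 n ω u (π i)) *
            Real.exp (-lam * ∑ i ∈ C 1, A1 n ω u i * B1 n ω u (π i)) *
            Real.exp (-lam * ∑ i ∈ C 2, A1 n ω u i * B1 n ω u (π i)) := by
    intro ω
    rw [← Real.exp_add, ← Real.exp_add]
    congr 1
    have hfib : ∑ i ∈ I, A1 n ω u i * B1 n ω u (π i)
        = ∑ k : Fin 3, ∑ i ∈ C k, A1 n ω u i * B1 n ω u (π i) :=
      (Finset.sum_fiberwise I f _).symm
    rw [hfib, Fin.sum_univ_three]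
    ring
  -- fourth moment bound
  have step2 : (∑ ω : ESpace n, prOmega n p s ω *
        Real.exp (-lam * ∑ i ∈ I, A1 n ω u i * B1 n ω u (π i))) ^ 4
      ≤ (1 + (Real.exp (-(4 * lam)) - 1) * (p * s) ^ 2) ^ (C 0).card *
          ((1 + (Real.exp (-(4 * lam)) - 1) * (p * s) ^ 2) ^ (C 1).card *
           (1 + (Real.exp (-(4 * lam)) - 1) * (p * s) ^ 2) ^ (C 2).card) := by
    have h := exp4 (prOmega n p s)
      (fun ω => Real.exp (-lam * ∑ i ∈ C 0, A1 n ω u i * B1 n ω u (π i)))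
      (fun ω => Real.exp (-lam * ∑ i ∈ C 1, A1 n ω u i * B1 n ω u (π i)))
      (fun ω => Real.exp (-lam * ∑ i ∈ C 2, A1 n ω u i * B1 n ω u (π i)))
      hμ (sum_prOmega n p s)
    rw [hMGF 0, hMGF 1, hMGF 2] at h
    calc (∑ ω : ESpace n, prOmega n p s ω *
          Real.exp (-lam * ∑ i ∈ I, A1 n ω u i * B1 n ω u (π i))) ^ 4
        = (∑ ω : ESpace n, prOmega n p s ω *
            (Real.exp (-lam * ∑ i ∈ C 0, A1 n ω u i * B1 n ω u (π i)) *
             Real.exp (-lam * ∑ i ∈ C 1, A1 n ω u i * B1 n ω u (π i)) *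
             Real.exp (-lam * ∑ i ∈ C 2, A1 n ω u i * B1 n ω u (π i)))) ^ 4 := by
          congr 1
          exact Finset.sum_congr rfl fun ω _ => by rw [hsplit ω]
      _ ≤ _ := h
  -- cardinalities add up
  have hcard : (C 0).card + ((C 1).card + (C 2).card) = I.card := by
    have h := Finset.card_eq_sum_card_fiberwise
      (f := f) (s := I) (t := (Finset.univ : Finset (Fin 3)))
      (fun i _ => Finset.mem_univ (f i))
    rw [Fin.sum_univ_three] at h
    rw [h]
    ring
  -- nonnegativity of Pr
  have hPr0 : 0 ≤ Pr n p s {ω | ∑ i ∈ I, A1 n ω u i * B1 n ω u (π i) ≤ c} :=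
    Finset.sum_nonneg fun ω _ => Set.indicator_nonneg (fun ω _ => hμ ω) ω
  have hexp40 : (0:ℝ) ≤ Real.exp (lam * c) *
      ∑ ω : ESpace n, prOmega n p s ω *
        Real.exp (-lam * ∑ i ∈ I, A1 n ω u i * B1 n ω u (π i)) :=
    mul_nonneg (Real.exp_pos _).le (Finset.sum_nonneg fun ω _ =>
      mul_nonneg (hμ ω) (Real.exp_pos _).le)
  calc (Pr n p s {ω | ∑ i ∈ I, A1 n ω u i * B1 n ω u (π i) ≤ c}) ^ 4
      ≤ (Real.exp (lam * c) * ∑ ω : ESpace n, prOmega n p s ω *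
          Real.exp (-lam * ∑ i ∈ I, A1 n ω u i * B1 n ω u (π i))) ^ 4 :=
        pow_le_pow_left₀ hPr0 step1 4
    _ = Real.exp (lam * c) ^ 4 * (∑ ω : ESpace n, prOmega n p s ω *
          Real.exp (-lam * ∑ i ∈ I, A1 n ω u i * B1 n ω u (π i))) ^ 4 := by ring
    _ ≤ Real.exp (lam * c) ^ 4 *
          ((1 + (Real.exp (-(4 * lam)) - 1) * (p * s) ^ 2) ^ (C 0).card *
           ((1 + (Real.exp (-(4 * lam)) - 1) * (p * s) ^ 2) ^ (C 1).card *
            (1 + (Real.exp (-(4 * lam)) - 1) * (p * s) ^ 2) ^ (C 2).card)) :=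
        mul_le_mul_of_nonneg_left step2 (by positivity)
    _ = Real.exp (4 * (lam * c)) *
          (1 + (Real.exp (-(4 * lam)) - 1) * (p * s) ^ 2) ^ I.card := by
        rw [← hcard, pow_add, pow_add]
        rw [show Real.exp (lam * c) ^ 4 = Real.exp ((4:ℕ) * (lam * c)) from
          (Real.exp_nat_mul _ 4).symm]
        push_cast
        ring
set_option maxHeartbeats 1600000 in
/-- eq. (5.7): concentration of the dependent sum of incorrect-seed
1-hop witness indicators for a true pair. -/
theorem dependent_sum_bound (n : ℕ) (p s β : ℝ)
    (hp : p ∈ Set.Ioo (0 : ℝ) 1) (hs : s ∈ Set.Ioc (0 : ℝ) 1) (hβ : β ∈ Set.Ico (0 : ℝ) 1)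
    (π : Equiv.Perm (Fin n)) (hfix : (fixedCount n π : ℝ) = β * n) (u : Fin n) :
    Pr n p s {ω |
        ∑ i ∈ univ \ ((univ.filter fun i => π i = i) ∪ {u, π.symm u}),
            A1 n ω u i * B1 n ω u (π i)
          ≤ ((n : ℝ) * (1 - β) - 2) * p ^ 2 * s ^ 2
              - 5 * Real.sqrt ((n : ℝ) * p ^ 2 * s ^ 2 * Real.log n) - 25 / 3 * Real.log n}
      ≤ (n : ℝ) ^ (-(8 / 3 : ℝ)) := by
  classical
  obtain ⟨hp0, hp1⟩ := hp
  obtain ⟨hs0, hs1⟩ := hs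
  obtain ⟨hb0, hb1⟩ := hβ
  rcases Nat.eq_zero_or_pos n with hn0 | hnpos
  · subst hn0; exact u.elim0
  have hn1 : 1 ≤ n := hnpos
  have hnR : (1:ℝ) ≤ (n:ℝ) := by exact_mod_cast hn1
  have hnR0 : (0:ℝ) < (n:ℝ) := by linarith
  have hl0 : 0 ≤ Real.log n := Real.log_nonneg hnR
  set I : Finset (Fin n) :=
    univ \ ((univ.filter fun i => π i = i) ∪ {u, π.symm u}) with hIdef
  set cE : ℝ := ((n : ℝ) * (1 - β) - 2) * p ^ 2 * s ^ 2
      - 5 * Real.sqrt ((n : ℝ) * p ^ 2 * s ^ 2 * Real.log n)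
      - 25 / 3 * Real.log n with hcdef
  -- properties of I
  have hIprop : ∀ i ∈ I, π i ≠ i ∧ i ≠ u ∧ π i ≠ u := by
    intro i hi
    rw [hIdef] at hi
    simp only [Finset.mem_sdiff, Finset.mem_union, Finset.mem_filter, Finset.mem_insert,
      Finset.mem_singleton, Finset.mem_univ, true_and, not_or] at hi
    refine ⟨hi.1, hi.2.1, fun h => hi.2.2 ?_⟩
    rw [← h, Equiv.symm_apply_apply]
  -- cardinality bounds
  have hXcard : (((univ.filter fun i : Fin n => π i = i) ∪ {u, π.symm u}).card : ℝ)
      ≤ β * n + 2 := by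
    have h1 := Finset.card_union_le (univ.filter fun i : Fin n => π i = i)
      ({u, π.symm u} : Finset (Fin n))
    have h2 : ({u, π.symm u} : Finset (Fin n)).card ≤ 2 :=
      (Finset.card_insert_le _ _).trans (by simp)
    have h3 : ((univ.filter fun i : Fin n => π i = i).card : ℝ) = β * n := hfix
    have h4 := le_trans h1 (Nat.add_le_add_left h2 _)
    calc (((univ.filter fun i : Fin n => π i = i) ∪ {u, π.symm u}).card : ℝ)
        ≤ ((univ.filter fun i : Fin n => π i = i).card : ℝ) + 2 := by exact_mod_cast h4
      _ = β * n + 2 := by rw [h3]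
  have hXle : ((univ.filter fun i : Fin n => π i = i) ∪ {u, π.symm u}).card ≤ n := by
    have h := Finset.card_le_univ ((univ.filter fun i : Fin n => π i = i) ∪ {u, π.symm u})
    simpa using h
  have hIcard_eq : (I.card : ℝ)
      = (n : ℝ) - (((univ.filter fun i : Fin n => π i = i) ∪ {u, π.symm u}).card : ℝ) := by
    rw [hIdef, Finset.card_sdiff_of_subset (Finset.subset_univ _), Finset.card_univ, Fintype.card_fin,
      Nat.cast_sub hXle]
  have hcard_ge : (n:ℝ) * (1 - β) - 2 ≤ (I.card : ℝ) := by
    rw [hIcard_eq]; nlinarith [hXcard]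
  have hcard_le : (I.card : ℝ) ≤ (n : ℝ) := by
    have := Finset.card_le_univ I
    simp only [Finset.card_univ, Fintype.card_fin] at this
    exact_mod_cast this
  -- parameters
  have ha0 : (0:ℝ) < (p * s) ^ 2 := by positivity
  have hps0 : 0 ≤ p * s := by positivity
  have hps1 : p * s ≤ 1 := by nlinarith [hp0, hp1, hs0, hs1]
  have ha1 : (p * s) ^ 2 ≤ 1 := by nlinarith [hps0, hps1]
  set t : ℝ := 5 * Real.sqrt ((n:ℝ) * p ^ 2 * s ^ 2 * Real.log n)
      + 25 / 3 * Real.log n with htdef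
  have hsqarg : (0:ℝ) ≤ (n:ℝ) * p ^ 2 * s ^ 2 * Real.log n := by positivity
  have hsq : Real.sqrt ((n:ℝ) * p ^ 2 * s ^ 2 * Real.log n) ^ 2
      = (n:ℝ) * p ^ 2 * s ^ 2 * Real.log n := Real.sq_sqrt hsqarg
  have ht0 : 0 ≤ t := by
    have := Real.sqrt_nonneg ((n:ℝ) * p ^ 2 * s ^ 2 * Real.log n)
    rw [htdef]; linarith
  set lam : ℝ := t / (4 * (n:ℝ) * (p * s) ^ 2) with hlamdef
  have hna : (0:ℝ) < (n:ℝ) * (p * s) ^ 2 := by positivity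
  have hlam0 : 0 ≤ lam := by
    rw [hlamdef]; positivity
  -- c is below the mean minus t
  have hcE : cE ≤ (I.card : ℝ) * (p * s) ^ 2 - t := by
    have h1 : ((n:ℝ) * (1 - β) - 2) * p ^ 2 * s ^ 2 ≤ (I.card : ℝ) * (p * s) ^ 2 := by
      calc ((n:ℝ) * (1 - β) - 2) * p ^ 2 * s ^ 2
          = ((n:ℝ) * (1 - β) - 2) * (p * s) ^ 2 := by ring
        _ ≤ (I.card : ℝ) * (p * s) ^ 2 :=
            mul_le_mul_of_nonneg_right hcard_ge (sq_nonneg _)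
    rw [hcdef, htdef]; linarith [h1]
  -- apply the Chernoff bound
  have hkey := chernoff4 n p s ⟨hp0, hp1⟩ ⟨hs0, hs1⟩ π u I hIprop cE lam hlam0
  -- analytic estimates
  set R : ℝ := Real.exp (-(4 * lam)) with hRdef
  clear_value I cE
  have hR0 : 0 < R := Real.exp_pos _
  have hRle : R - 1 ≤ -(4 * lam) + 8 * lam ^ 2 := by
    have h := exp_neg_le (x := 4 * lam) (by linarith)
    rw [← hRdef] at h
    nlinarith [h]
  have hR1 : R ≤ 1 := by
    rw [hRdef]
    exact Real.exp_le_one_iff.mpr (by linarith)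
  have hD0 : (0:ℝ) ≤ 1 + (R - 1) * (p * s) ^ 2 := by
    have h1 : (1 - R) * (p * s) ^ 2 ≤ 1 :=
      mul_le_one₀ (by linarith) (sq_nonneg _) ha1
    nlinarith [h1]
  have hDle : 1 + (R - 1) * (p * s) ^ 2
      ≤ Real.exp ((-(4 * lam) + 8 * lam ^ 2) * (p * s) ^ 2) := by
    have h1 : (R - 1) * (p * s) ^ 2 + 1 ≤ Real.exp ((R - 1) * (p * s) ^ 2) :=
      Real.add_one_le_exp _
    have h2 : (R - 1) * (p * s) ^ 2 ≤ (-(4 * lam) + 8 * lam ^ 2) * (p * s) ^ 2 := by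
      nlinarith [hRle, ha0.le]
    calc 1 + (R - 1) * (p * s) ^ 2 = (R - 1) * (p * s) ^ 2 + 1 := by ring
      _ ≤ Real.exp ((R - 1) * (p * s) ^ 2) := h1
      _ ≤ _ := Real.exp_le_exp.mpr h2
  have hpow : (1 + (R - 1) * (p * s) ^ 2) ^ I.card
      ≤ Real.exp ((I.card : ℝ) * ((-(4 * lam) + 8 * lam ^ 2) * (p * s) ^ 2)) := by
    calc (1 + (R - 1) * (p * s) ^ 2) ^ I.card
        ≤ Real.exp ((-(4 * lam) + 8 * lam ^ 2) * (p * s) ^ 2) ^ I.card :=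
          pow_le_pow_left₀ hD0 hDle _
      _ = Real.exp ((I.card : ℝ) * ((-(4 * lam) + 8 * lam ^ 2) * (p * s) ^ 2)) := by
          rw [← Real.exp_nat_mul]
  have hexp_le : 4 * (lam * cE) + (I.card : ℝ) * ((-(4 * lam) + 8 * lam ^ 2) * (p * s) ^ 2)
      ≤ -(32 / 3) * Real.log n := by
    have e2 : (I.card : ℝ) * (8 * lam ^ 2 * (p * s) ^ 2)
        ≤ (n : ℝ) * (8 * lam ^ 2 * (p * s) ^ 2) :=
      mul_le_mul_of_nonneg_right hcard_le (by positivity)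
    have e4 : 25 * ((n:ℝ) * (p * s) ^ 2 * Real.log n) ≤ t ^ 2 := by
      have hsn := Real.sqrt_nonneg ((n:ℝ) * p ^ 2 * s ^ 2 * Real.log n)
      have hadd : 0 ≤ 2 * (5 * Real.sqrt ((n:ℝ) * p ^ 2 * s ^ 2 * Real.log n))
          * (25 / 3 * Real.log n) + (25 / 3 * Real.log n) ^ 2 := by
        have h6 : 0 ≤ 2 * (5 * Real.sqrt ((n:ℝ) * p ^ 2 * s ^ 2 * Real.log n))
            * (25 / 3 * Real.log n) :=
          mul_nonneg (by linarith) (by linarith)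
        have h7 := sq_nonneg (25 / 3 * Real.log n)
        linarith
      rw [htdef]
      calc 25 * ((n:ℝ) * (p * s) ^ 2 * Real.log n)
          = 25 * Real.sqrt ((n:ℝ) * p ^ 2 * s ^ 2 * Real.log n) ^ 2 := by rw [hsq]; ring
        _ ≤ 25 * Real.sqrt ((n:ℝ) * p ^ 2 * s ^ 2 * Real.log n) ^ 2
              + (2 * (5 * Real.sqrt ((n:ℝ) * p ^ 2 * s ^ 2 * Real.log n))
                * (25 / 3 * Real.log n) + (25 / 3 * Real.log n) ^ 2) := by linarith
        _ = (5 * Real.sqrt ((n:ℝ) * p ^ 2 * s ^ 2 * Real.log n)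
              + 25 / 3 * Real.log n) ^ 2 := by ring
    have e5 : -(t ^ 2) / (2 * ((n:ℝ) * (p * s) ^ 2)) ≤ -(32 / 3) * Real.log n := by
      rw [div_le_iff₀ (by positivity)]
      have h8 : 0 ≤ (n:ℝ) * (p * s) ^ 2 * Real.log n :=
        mul_nonneg (mul_nonneg hnR0.le ha0.le) hl0
      clear_value t
      nlinarith [e4, h8]
    calc 4 * (lam * cE) + (I.card : ℝ) * ((-(4 * lam) + 8 * lam ^ 2) * (p * s) ^ 2)
        ≤ 4 * lam * ((I.card : ℝ) * (p * s) ^ 2 - t)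
            + (I.card : ℝ) * ((-(4 * lam) + 8 * lam ^ 2) * (p * s) ^ 2) := by
          linarith [mul_le_mul_of_nonneg_left hcE hlam0]
      _ = -(4 * lam) * t + (I.card : ℝ) * (8 * lam ^ 2 * (p * s) ^ 2) := by ring
      _ ≤ -(4 * lam) * t + (n : ℝ) * (8 * lam ^ 2 * (p * s) ^ 2) := by linarith [e2]
      _ = -(t ^ 2) / (2 * ((n:ℝ) * (p * s) ^ 2)) := by
          rw [hlamdef]
          field_simp [hnR0.ne', ha0.ne']
          ring
      _ ≤ -(32 / 3) * Real.log n := e5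
  -- put the pieces together
  have hfinal : Real.exp (4 * (lam * cE)) * (1 + (R - 1) * (p * s) ^ 2) ^ I.card
      ≤ ((n : ℝ) ^ (-(8 / 3 : ℝ))) ^ 4 := by
    have h1 : Real.exp (4 * (lam * cE)) * (1 + (R - 1) * (p * s) ^ 2) ^ I.card
        ≤ Real.exp (4 * (lam * cE)) *
            Real.exp ((I.card : ℝ) * ((-(4 * lam) + 8 * lam ^ 2) * (p * s) ^ 2)) :=
      mul_le_mul_of_nonneg_left hpow (Real.exp_pos _).le
    rw [← Real.exp_add] at h1
    have h2 := Real.exp_le_exp.mpr hexp_le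
    have h3 : Real.exp (-(32 / 3) * Real.log n) = ((n : ℝ) ^ (-(8 / 3 : ℝ))) ^ 4 := by
      have h4 : ((n : ℝ) ^ (-(8 / 3 : ℝ))) ^ (4:ℕ) = (n : ℝ) ^ (-(32 / 3) : ℝ) := by
        rw [← Real.rpow_natCast ((n : ℝ) ^ (-(8 / 3 : ℝ))) 4, ← Real.rpow_mul hnR0.le]
        norm_num
      rw [h4, Real.rpow_def_of_pos hnR0]
      ring_nf
    rw [← h3]
    exact le_trans h1 h2
  have hPr4 : (Pr n p s {ω | ∑ i ∈ I, A1 n ω u i * B1 n ω u (π i) ≤ cE}) ^ 4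
      ≤ ((n : ℝ) ^ (-(8 / 3 : ℝ))) ^ 4 := le_trans hkey hfinal
  have hPr0 : 0 ≤ Pr n p s {ω | ∑ i ∈ I, A1 n ω u i * B1 n ω u (π i) ≤ cE} :=
    Finset.sum_nonneg fun ω _ => Set.indicator_nonneg
      (fun ω _ => prOmega_nonneg hp0.le hp1.le hs0.le hs1 ω) ω
  exact le_of_pow_le_pow_left₀ (by norm_num) (Real.rpow_nonneg hnR0.le _) hPr4

end SeededGraphMatching
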